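/- Let n ≥ 1, let Σ ∈ ℂ^{n×n} be Hermitian, let Ψ be a real symmetric n×n matrix (identified with its complex image), and let w ∈ 𝕋_n. Then ‖Σ − Ψ ∘ (w wᴴ)‖_F² = ‖Σ‖_F² + ‖Ψ‖_F² − 2·Re(wᴴ (Ψ ∘ Σ) w), where ‖·‖_F denotes the Frobenius norm. In particular, minimizing w ↦ ‖Σ − Ψ ∘ (w wᴴ)‖_F² over 𝕋_n is equivalent to minimizing w ↦ −2·wᴴ (Ψ ∘ Σ) w. -/

import Mathlib

open Matrix

/-- Squared Frobenius norm of a complex matrix: `‖B‖_F² = Σ_{ij} |B_{ij}|²`. -/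
noncomputable def frobSq {m n : Type*} [Fintype m] [Fintype n]
    (B : Matrix m n ℂ) : ℝ :=
  ∑ i, ∑ j, ‖B i j‖ ^ 2

/-- For `Σ` Hermitian, `Ψ` real symmetric (identified with its complex image) and
`w` on the torus `𝕋_n`:
`‖Σ − Ψ ∘ (w wᴴ)‖_F² = ‖Σ‖_F² + ‖Ψ‖_F² − 2·Re(wᴴ (Ψ ∘ Σ) w)`, so minimizing the
Frobenius fit over the torus amounts to minimizing `−2·wᴴ (Ψ ∘ Σ) w`. -/
theorem frobenius_fit_expansion {n : ℕ} (hn : 1 ≤ n)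
    (Sig : Matrix (Fin n) (Fin n) ℂ) (hSig : Sig.IsHermitian)
    (Psi : Matrix (Fin n) (Fin n) ℝ) (hPsiSym : Psiᵀ = Psi)
    (w : Fin n → ℂ) (hw : ∀ i, ‖w i‖ = 1) :
    frobSq (Sig - Matrix.hadamard (Psi.map Complex.ofReal)
        (Matrix.vecMulVec w (star w)))
      = frobSq Sig + frobSq (Psi.map Complex.ofReal)
        - 2 * (star w ⬝ᵥ (Matrix.hadamard (Psi.map Complex.ofReal) Sig) *ᵥ w).re := by
  have key : ∀ i j, ‖(Sig - Matrix.hadamard (Psi.map Complex.ofReal)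
        (Matrix.vecMulVec w (star w))) i j‖ ^ 2
      = ‖Sig i j‖ ^ 2 + ‖(Psi.map Complex.ofReal) i j‖ ^ 2
        - 2 * ((starRingEnd ℂ) (w i) * (((Psi i j : ℂ) * Sig i j) * w j)).re := by
    intro i j
    simp only [Matrix.sub_apply, Matrix.hadamard_apply, Matrix.vecMulVec_apply,
      Matrix.map_apply, Pi.star_apply]
    rw [Complex.sq_norm, Complex.sq_norm, Complex.sq_norm, Complex.normSq_sub]
    have h1 : Complex.normSq ((Psi i j : ℂ) * (w i * star (w j)))
        = Complex.normSq (Psi i j : ℂ) := by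
      rw [_root_.map_mul, _root_.map_mul, Complex.star_def, Complex.normSq_conj]
      have : ∀ k, Complex.normSq (w k) = 1 := by
        intro k; rw [Complex.normSq_eq_norm_sq, hw k]; norm_num
      rw [this i, this j]; ring
    rw [h1]
    have h2 : Sig i j * (starRingEnd ℂ) ((Psi i j : ℂ) * (w i * star (w j)))
        = (starRingEnd ℂ) (w i) * (((Psi i j : ℂ) * Sig i j) * w j) := by
      simp only [_root_.map_mul, Complex.conj_ofReal, Complex.star_def, Complex.conj_conj]
      ring
    rw [h2]
  simp only [frobSq, key, Finset.sum_sub_distrib, Finset.sum_add_distrib,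
    ← Finset.mul_sum]
  congr 1
  congr 1
  rw [dotProduct, Complex.re_sum]
  congr 1
  ext i
  rw [Pi.star_apply, Matrix.mulVec, dotProduct, Finset.mul_sum, Complex.re_sum]
  simp only [Matrix.hadamard_apply, Matrix.map_apply, Complex.star_def]
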